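/- Let r ≥ 2 and let a_1, …, a_r be positive real numbers. Let e_1, …, e_r be the standard basis of ℝ^r, and for 1 ≤ i ≤ r−1 set w_i = (1/a_i)·e_i − (1/a_r)·e_r. Then the determinant of the Gram matrix (⟨w_i, w_j⟩)_{1≤i,j≤r−1} equals (Σ_{i=1}^r a_i²) / (∏_{i=1}^r a_i²). -/

import Mathlib

/-- Let `r ≥ 2` and let `a₁, …, a_r` be positive reals. With `e₁, …, e_r` the
standard basis of `ℝ^r`, set `w i = (1 / a i) • e i - (1 / a r) • e r` for `1 ≤ i ≤ r - 1`
(written coordinatewise below). Then the determinant of the Gram matrix `(⟨w i, w j⟩)` equals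
`(∑ i, a i ^ 2) / ∏ i, a i ^ 2`. -/
theorem stmt1 (r : ℕ) (hr : 2 ≤ r) (a : Fin r → ℝ) (ha : ∀ i, 0 < a i)
    (w : Fin (r - 1) → Fin r → ℝ)
    (hw : ∀ (i : Fin (r - 1)) (k : Fin r),
      w i k = (if k = Fin.castLE (Nat.sub_le r 1) i then (a k)⁻¹ else 0)
            - (if (k : ℕ) = r - 1 then (a k)⁻¹ else 0)) :
    (Matrix.of fun i j : Fin (r - 1) => ∑ k, w i k * w j k).det
      = (∑ i, a i ^ 2) / ∏ i, a i ^ 2 := by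
  obtain ⟨n, rfl⟩ : ∃ n, r = n + 1 := ⟨r - 1, by omega⟩
  set d : Fin (n + 1 - 1) → ℝ := fun i => ((a (Fin.castLE (Nat.sub_le (n+1) 1) i))⁻¹) ^ 2 with hd
  set c : ℝ := ((a (Fin.last n))⁻¹) ^ 2 with hc
  have hane : ∀ i, a i ≠ 0 := fun i => (ha i).ne'
  have hcc : ∀ i : Fin (n+1-1),
      Fin.castSucc (i : Fin n) = Fin.castLE (Nat.sub_le (n+1) 1) i := fun i => Fin.ext rfl
  -- compute the Gram entries
  have hgram : ∀ i j : Fin (n + 1 - 1),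
      ∑ k, w i k * w j k = (if i = j then d i else 0) + c := by
    intro i j
    have hcast : ∀ (m : Fin n) (i : Fin (n+1-1)),
        (Fin.castSucc m = Fin.castLE (Nat.sub_le (n+1) 1) i) ↔ m = i := by
      intro m i; simp [Fin.ext_iff]
    have hne : ∀ i : Fin (n+1-1), ¬ (Fin.last n = Fin.castLE (Nat.sub_le (n+1) 1) i) := by
      intro i h
      have := congrArg Fin.val h
      simp at this
      omega
    have hlastval : (Fin.last n : ℕ) = n + 1 - 1 := by simp
    have hmval : ∀ m : Fin n, ¬ ((Fin.castSucc m : ℕ) = n + 1 - 1) := by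
      intro m; simp; omega
    rw [Fin.sum_univ_castSucc]
    simp only [hw, hcast, hne, hlastval, hmval, if_true, if_false, if_pos rfl, sub_zero,
      zero_sub, neg_mul_neg, ite_mul, mul_ite, zero_mul, mul_zero]
    simp only [Finset.sum_ite_eq', Finset.mem_univ, if_true]
    congr 1
    · by_cases hij : i = j
      · subst hij
        rw [if_pos rfl, if_pos rfl, hcc i]
        simp [hd, pow_two]
      · rw [if_neg (fun h => hij (Fin.ext (congrArg Fin.val h)).symm), if_neg hij]
    · rw [hc, sq]
  have hM : (Matrix.of fun i j : Fin (n + 1 - 1) => ∑ k, w i k * w j k)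
      = Matrix.diagonal d + Matrix.replicateCol Unit (fun _ => c) * Matrix.replicateRow Unit (fun _ => (1:ℝ)) := by
    ext i j
    simp [hgram i j, Matrix.diagonal, Matrix.mul_apply, Matrix.replicateCol, Matrix.replicateRow]
  have hdne : ∀ i, d i ≠ 0 := fun i => pow_ne_zero _ (inv_ne_zero (hane _))
  have hdet : IsUnit (Matrix.diagonal d).det := by
    rw [Matrix.det_diagonal]
    exact (Finset.prod_ne_zero_iff.2 fun i _ => hdne i).isUnit
  rw [hM, Matrix.det_add_replicateCol_mul_replicateRow hdet, Matrix.det_diagonal]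
  have hentry : ((1 + (Matrix.replicateRow Unit (fun _ : Fin (n+1-1) => (1:ℝ)) : Matrix Unit (Fin (n+1-1)) ℝ) * ((Matrix.diagonal d)⁻¹ : Matrix (Fin (n+1-1)) (Fin (n+1-1)) ℝ) *
      (Matrix.replicateCol Unit (fun _ => c) : Matrix (Fin (n+1-1)) Unit ℝ) : Matrix Unit Unit ℝ)).det
      = 1 + ∑ i : Fin (n+1-1), (d i)⁻¹ * c := by
    have hinv : (Matrix.diagonal d)⁻¹ = Matrix.diagonal (fun i => (d i)⁻¹) :=
      Matrix.inv_eq_right_inv (by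
        rw [Matrix.diagonal_mul_diagonal]
        simp [fun i => mul_inv_cancel₀ (hdne i)])
    rw [Matrix.det_unique, hinv]
    simp [Matrix.mul_apply, Matrix.replicateRow, Matrix.replicateCol, Matrix.diagonal, Ring.inverse_eq_inv,
      Finset.sum_mul, mul_comm, Ring.inverse_eq_inv']
  rw [hentry]
  -- now pure algebra
  rw [Fin.sum_univ_castSucc (f := fun i => a i ^ 2), Fin.prod_univ_castSucc (f := fun i => a i ^ 2)]
  have hprod : ∏ i : Fin (n+1-1), d i = (∏ i : Fin n, a (Fin.castSucc i) ^ 2)⁻¹ := by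
    rw [← Finset.prod_inv_distrib]
    exact Finset.prod_congr rfl fun m _ => by rw [hd]; simp only [← hcc]; rw [inv_pow]
  have hsum : ∑ i : Fin (n+1-1), (d i)⁻¹ * c = (∑ i : Fin n, a (Fin.castSucc i) ^ 2) * c := by
    rw [Finset.sum_mul]
    exact Finset.sum_congr rfl fun m _ => by
      rw [hd]; simp only [← hcc]; rw [inv_pow, inv_inv]
  rw [hprod, hsum, hc]
  have h1 : (∏ i : Fin n, a (Fin.castSucc i) ^ 2) ≠ 0 :=
    Finset.prod_ne_zero_iff.2 fun i _ => pow_ne_zero _ (hane _)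
  have h2 : a (Fin.last n) ≠ 0 := hane _
  field_simp
  ring
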